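/- Let n ≥ 3 and let λ and μ be partitions of n such that λ and μ have the same number of parts equal to 1 and the same number of parts equal to 2. Then for every weighted inversion statistic X on S_n, the average of X over the conjugacy class C_λ equals the average of X over the conjugacy class C_μ. -/

import Mathlib

/-- The conjugacy class of `S_n` consisting of permutations of cycle type `lam`
(Mathlib's `cycleType` omits fixed points, so we compare with the parts of `lam` not equal
to `1`). -/
noncomputable def conjClass (n : ℕ) (lam : n.Partition) : Finset (Equiv.Perm (Fin n)) :=
  Finset.univ.filter fun ω => ω.cycleType = Multiset.filter (fun i => i ≠ 1) lam.parts

open Finset Equiv Equiv.Perm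

variable {n : ℕ}


lemma support_cycleOf_pair {ω : Perm (Fin n)} {x : Fin n} (h1 : ω x ≠ x) (h2 : ω (ω x) = x) :
    (ω.cycleOf x).support = {x, ω x} := by
  ext y
  simp only [Equiv.Perm.mem_support_cycleOf_iff, Finset.mem_insert, Finset.mem_singleton]
  constructor
  · rintro ⟨hsc, -⟩
    obtain ⟨i, -, rfl⟩ := hsc.exists_pow_eq'
    clear hsc
    induction i with
    | zero => left; simp
    | succ k ih =>
      rcases ih with h | h
      · right; rw [pow_succ', Equiv.Perm.mul_apply, h]
      · left; rw [pow_succ', Equiv.Perm.mul_apply, h, h2]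
  · rintro (rfl | rfl)
    · exact ⟨Equiv.Perm.SameCycle.refl _ _, Equiv.Perm.mem_support.2 h1⟩
    · exact ⟨⟨1, by simp⟩, Equiv.Perm.mem_support.2 h1⟩

lemma two_cycle_count (ω : Perm (Fin n)) :
    (univ.filter fun x => ω x ≠ x ∧ ω (ω x) = x).card = 2 * Multiset.count 2 ω.cycleType := by
  have hset : (univ.filter fun x => ω x ≠ x ∧ ω (ω x) = x)
      = (ω.cycleFactorsFinset.filter fun c => c.support.card = 2).biUnion (fun c => c.support) := by
    ext x
    simp only [mem_filter, mem_biUnion, mem_univ, true_and]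
    constructor
    · rintro ⟨hx1, hx2⟩
      refine ⟨ω.cycleOf x, ⟨Equiv.Perm.cycleOf_mem_cycleFactorsFinset_iff.2
        (Equiv.Perm.mem_support.2 hx1), ?_⟩, ?_⟩
      · rw [support_cycleOf_pair hx1 hx2, card_insert_of_notMem (by simp [Ne.symm hx1]),
          card_singleton]
      · rw [support_cycleOf_pair hx1 hx2]; simp
    · rintro ⟨c, ⟨hcf, hcard⟩, hx⟩
      obtain ⟨hcyc, happ⟩ := Equiv.Perm.mem_cycleFactorsFinset_iff.1 hcf
      have hcx : c x = ω x := happ x hx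
      have hxne : c x ≠ x := Equiv.Perm.mem_support.1 hx
      have hc2 : c ^ 2 = 1 := by
        rw [← hcard, ← hcyc.orderOf]; exact pow_orderOf_eq_one c
      have hcc : c (c x) = x := by
        have := congrArg (fun f : Perm (Fin n) => f x) hc2
        simpa [pow_succ, Equiv.Perm.mul_apply] using this
      refine ⟨by rw [← hcx]; exact hxne, ?_⟩
      have hcx2 : c (ω x) = ω (ω x) := happ (ω x) (by rw [← hcx]; exact Equiv.Perm.apply_mem_support.2 hx)
      rw [← hcx2, ← hcx, hcc]
  rw [hset, card_biUnion]
  · have h2 : ∀ c ∈ (ω.cycleFactorsFinset.filter fun c => c.support.card = 2), c.support.card = 2 :=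
      fun c hc => (mem_filter.1 hc).2
    rw [Finset.sum_congr rfl h2, Finset.sum_const, smul_eq_mul, mul_comm]
    congr 1
    rw [Equiv.Perm.cycleType_def, Multiset.count_map]
    have hp : Multiset.filter (fun a => 2 = (Finset.card ∘ Equiv.Perm.support) a)
          ω.cycleFactorsFinset.val
        = Multiset.filter (fun c => c.support.card = 2) ω.cycleFactorsFinset.val :=
      Multiset.filter_congr (fun x _ => by simp [Function.comp, eq_comm])
    rw [hp]
    rfl
  · intro c1 h1 c2 h2 hne
    exact Equiv.Perm.Disjoint.disjoint_support
      ((ω.cycleFactorsFinset_pairwise_disjoint) (mem_filter.1 h1).1 (mem_filter.1 h2).1 hne)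


section ClassLemmas
variable {lam : n.Partition}


lemma mem_conjClass {ω : Perm (Fin n)} :
    ω ∈ conjClass n lam ↔ ω.cycleType = Multiset.filter (fun i => i ≠ 1) lam.parts := by
  simp [conjClass]

lemma conjClass_nonempty (hn : 1 ≤ n) : (conjClass n lam).Nonempty := by
  have hsum : (Multiset.filter (fun i => i = 1) lam.parts).sum
      + (Multiset.filter (fun i => i ≠ 1) lam.parts).sum = n := by
    rw [Multiset.sum_filter_add_sum_filter_not, lam.parts_sum]
  have hpre : (Multiset.filter (fun i => i ≠ 1) lam.parts).sum ≤ Fintype.card (Fin n)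
      ∧ ∀ a ∈ Multiset.filter (fun i => i ≠ 1) lam.parts, 2 ≤ a := by
    constructor
    · rw [Fintype.card_fin]; omega
    · intro a ha
      rw [Multiset.mem_filter] at ha
      have := lam.parts_pos ha.1
      have := ha.2
      omega
  obtain ⟨g, hg⟩ := (Equiv.Perm.exists_with_cycleType_iff (Fin n)).2 hpre
  exact ⟨g, mem_conjClass.2 hg⟩

lemma fix_card {ω : Perm (Fin n)} (hω : ω ∈ conjClass n lam) :
    (univ.filter fun x => ω x = x).card = Multiset.count 1 lam.parts := by
  have hsupp : ω.support.card = (Multiset.filter (fun i => i ≠ 1) lam.parts).sum := by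
    rw [← Equiv.Perm.sum_cycleType, mem_conjClass.1 hω]
  have hsum : (Multiset.filter (fun i => i = 1) lam.parts).sum
      + (Multiset.filter (fun i => i ≠ 1) lam.parts).sum = n := by
    rw [Multiset.sum_filter_add_sum_filter_not, lam.parts_sum]
  have h1 : (Multiset.filter (fun i => i = 1) lam.parts).sum = Multiset.count 1 lam.parts := by
    have : Multiset.filter (fun i => i = 1) lam.parts
        = Multiset.replicate (Multiset.count 1 lam.parts) 1 := by
      rw [← Multiset.filter_eq]
      exact Multiset.filter_congr (fun x _ => by constructor <;> intro h <;> simp_all)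
    rw [this, Multiset.sum_replicate, smul_eq_mul, mul_one]
  have hpart : (univ.filter fun x => ω x = x).card + ω.support.card = n := by
    have := Finset.card_filter_add_card_filter_not
      (s := (univ : Finset (Fin n))) (p := fun x => ω x = x)
    simp only [Finset.card_univ, Fintype.card_fin] at this
    have hs : ω.support = univ.filter (fun a => ¬ ω a = a) := rfl
    rw [hs]
    exact this
  omega

lemma sqfix_card {ω : Perm (Fin n)} (hω : ω ∈ conjClass n lam) :
    (univ.filter fun x => ω (ω x) = x).card
      = Multiset.count 1 lam.parts + 2 * Multiset.count 2 lam.parts := by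
  have key : (univ.filter fun x => ω (ω x) = x).card
      = (univ.filter fun x => ω x = x).card
        + (univ.filter fun x => ω x ≠ x ∧ ω (ω x) = x).card := by
    rw [Finset.card_filter, Finset.card_filter, Finset.card_filter, ← Finset.sum_add_distrib]
    apply Finset.sum_congr rfl
    intro x _
    by_cases h : ω x = x
    · simp [h]
    · simp [h]
  have h2 : Multiset.count 2 ω.cycleType = Multiset.count 2 lam.parts := by
    rw [mem_conjClass.1 hω, Multiset.count_filter]
    simp
  rw [key, fix_card hω, two_cycle_count, h2]

end ClassLemmas

noncomputable def Ncard (lam : n.Partition) (i j a b : Fin n) : ℕ :=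
  ((conjClass n lam).filter fun ω => ω i = a ∧ ω j = b).card

variable {lam : n.Partition}

lemma Ncard_conj (σ : Perm (Fin n)) (i j a b : Fin n) :
    Ncard lam i j a b = Ncard lam (σ i) (σ j) (σ a) (σ b) := by
  classical
  apply Finset.card_nbij' (fun ω => σ * ω * σ⁻¹) (fun ω => σ⁻¹ * ω * σ)
  · intro ω hω
    rw [Finset.mem_coe, Finset.mem_filter] at hω ⊢
    obtain ⟨hm, hi, hj⟩ := hω
    refine ⟨mem_conjClass.2 ?_, ?_, ?_⟩
    · rw [Equiv.Perm.cycleType_conj, mem_conjClass.1 hm]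
    · simp [Equiv.Perm.mul_apply, hi]
    · simp [Equiv.Perm.mul_apply, hj]
  · intro ω hω
    rw [Finset.mem_coe, Finset.mem_filter] at hω ⊢
    obtain ⟨hm, hi, hj⟩ := hω
    refine ⟨mem_conjClass.2 ?_, ?_, ?_⟩
    · have : σ⁻¹ * ω * σ = σ⁻¹ * ω * (σ⁻¹)⁻¹ := by simp
      show (σ⁻¹ * ω * σ).cycleType = _
      rw [this, Equiv.Perm.cycleType_conj, mem_conjClass.1 hm]
    · simp only [Equiv.Perm.mul_apply] at hi ⊢
      simp [hi]
    · simp only [Equiv.Perm.mul_apply] at hj ⊢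
      simp [hj]
  · intro ω _; group
  · intro ω _; group

lemma Ncard_congr {σ : Perm (Fin n)} {i j a b i' j' a' b' : Fin n}
    (hi : σ i = i') (hj : σ j = j') (ha : σ a = a') (hb : σ b = b') :
    Ncard lam i j a b = Ncard lam i' j' a' b' := by
  rw [Ncard_conj σ i j a b, hi, hj, ha, hb]

lemma Ncard_diag_zero {i j a : Fin n} (hij : i ≠ j) : Ncard lam i j a a = 0 := by
  rw [Ncard, Finset.card_eq_zero]
  apply Finset.filter_false_of_mem
  rintro ω _ ⟨h1, h2⟩
  exact hij (ω.injective (h1.trans h2.symm))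

lemma N1_eq (i a : Fin n) :
    Ncard lam i i a a = ((conjClass n lam).filter fun ω => ω i = a).card := by
  rw [Ncard]
  congr 1
  apply Finset.filter_congr
  intro ω _
  simp

lemma fiber_sum (i j a : Fin n) :
    ∑ b, Ncard lam i j a b = Ncard lam i i a a := by
  rw [N1_eq]
  rw [Finset.card_eq_sum_card_fiberwise
    (f := fun ω : Perm (Fin n) => ω j) (t := univ) (fun x _ => mem_univ _)]
  apply Finset.sum_congr rfl
  intro b _
  rw [Ncard, Finset.filter_filter]

lemma fiber_sum' (i j b : Fin n) :
    ∑ a, Ncard lam i j a b = Ncard lam j j b b := by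
  rw [N1_eq]
  rw [Finset.card_eq_sum_card_fiberwise
    (f := fun ω : Perm (Fin n) => ω i) (t := univ) (fun x _ => mem_univ _)]
  apply Finset.sum_congr rfl
  intro a _
  rw [Ncard, Finset.filter_filter]
  congr 1
  apply Finset.filter_congr
  intro ω _
  exact and_comm

lemma sum_N1 (i : Fin n) : ∑ a, Ncard lam i i a a = (conjClass n lam).card := by
  have := Finset.card_eq_sum_card_fiberwise
    (f := fun ω : Perm (Fin n) => ω i) (t := univ) (s := conjClass n lam) (fun x _ => mem_univ _)
  rw [this]
  apply Finset.sum_congr rfl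
  intro a _
  rw [N1_eq]


lemma exists_perm_pair {i j k l : Fin n} (hij : i ≠ j) (hkl : k ≠ l) :
    ∃ σ : Perm (Fin n), σ i = k ∧ σ j = l := by
  refine ⟨Equiv.swap (Equiv.swap i k j) l * Equiv.swap i k, ?_, ?_⟩
  · have hne : Equiv.swap i k j ≠ k := by
      intro h
      apply hij
      apply (Equiv.swap i k).injective
      rw [h, Equiv.swap_apply_left]
    rw [Equiv.Perm.mul_apply, Equiv.swap_apply_left,
      Equiv.swap_apply_of_ne_of_ne (Ne.symm hne) hkl]
  · rw [Equiv.Perm.mul_apply, Equiv.swap_apply_left]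

lemma exists_perm_fix_two {i j a b a' b' : Fin n} (hab : a ≠ b) (hab' : a' ≠ b')
    (hia : i ≠ a) (hib : i ≠ b) (hia' : i ≠ a') (hib' : i ≠ b')
    (hja : j ≠ a) (hjb : j ≠ b) (hja' : j ≠ a') (hjb' : j ≠ b') :
    ∃ σ : Perm (Fin n), σ i = i ∧ σ j = j ∧ σ a = a' ∧ σ b = b' := by
  set σ₁ := Equiv.swap a a' with hσ₁
  have hσ₁i : σ₁ i = i := Equiv.swap_apply_of_ne_of_ne hia hia'
  have hσ₁j : σ₁ j = j := Equiv.swap_apply_of_ne_of_ne hja hja'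
  have hσ₁a : σ₁ a = a' := Equiv.swap_apply_left a a'
  set b'' := σ₁ b with hb''
  have hib'' : i ≠ b'' := by rw [← hσ₁i, hb'']; exact fun h => hib (σ₁.injective h)
  have hjb'' : j ≠ b'' := by rw [← hσ₁j, hb'']; exact fun h => hjb (σ₁.injective h)
  have hab'' : a' ≠ b'' := by rw [← hσ₁a, hb'']; exact fun h => hab (σ₁.injective h)
  refine ⟨Equiv.swap b'' b' * σ₁, ?_, ?_, ?_, ?_⟩
  · rw [Equiv.Perm.mul_apply, hσ₁i, Equiv.swap_apply_of_ne_of_ne hib'' hib']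
  · rw [Equiv.Perm.mul_apply, hσ₁j, Equiv.swap_apply_of_ne_of_ne hjb'' hjb']
  · rw [Equiv.Perm.mul_apply, hσ₁a, Equiv.swap_apply_of_ne_of_ne hab'' hab']
  · rw [Equiv.Perm.mul_apply, ← hb'', Equiv.swap_apply_left]

lemma sum_split {M : Type*} [AddCommMonoid M] {i j : Fin n} (hij : i ≠ j) (f : Fin n → M) :
    ∑ x, f x = f i + f j + ∑ x ∈ (univ.erase i).erase j, f x := by
  rw [← Finset.add_sum_erase _ f (mem_univ i),
    ← Finset.add_sum_erase _ f (Finset.mem_erase.2 ⟨hij.symm, mem_univ j⟩), add_assoc]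

lemma mem_R {i j x : Fin n} : x ∈ (univ.erase i).erase j ↔ x ≠ j ∧ x ≠ i := by
  simp [Finset.mem_erase]

lemma card_R {i j : Fin n} (hij : i ≠ j) : ((univ.erase i).erase j).card = n - 2 := by
  rw [Finset.card_erase_of_mem (Finset.mem_erase.2 ⟨hij.symm, mem_univ j⟩),
    Finset.card_erase_of_mem (mem_univ i), Finset.card_univ, Fintype.card_fin]
  omega

lemma card_filter_lt (k : Fin n) : (univ.filter fun b : Fin n => b < k).card = k.val := by
  rw [show (univ.filter fun b : Fin n => b < k) = Finset.Iio k by ext x; simp, Fin.card_Iio]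

lemma card_filter_gt (k : Fin n) : (univ.filter fun b : Fin n => k < b).card = n - 1 - k.val := by
  rw [show (univ.filter fun b : Fin n => k < b) = Finset.Ioi k by ext x; simp, Fin.card_Ioi]

-- R-filter cards
lemma card_R_lt_i {i j : Fin n} (hij : i < j) :
    (((univ.erase i).erase j).filter fun b => b < i).card = i.val := by
  rw [Finset.filter_erase, Finset.filter_erase,
    Finset.erase_eq_of_notMem (by simp [Finset.mem_erase, not_lt.2 hij.le]),
    Finset.erase_eq_of_notMem (by simp), card_filter_lt]

lemma card_R_lt_j {i j : Fin n} (hij : i < j) :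
    (((univ.erase i).erase j).filter fun b => b < j).card = j.val - 1 := by
  rw [Finset.filter_erase, Finset.filter_erase,
    Finset.erase_eq_of_notMem (by simp),
    Finset.card_erase_of_mem (by simp [hij]), card_filter_lt]

lemma card_R_gt_i {i j : Fin n} (hij : i < j) :
    (((univ.erase i).erase j).filter fun b => i < b).card = n - 2 - i.val := by
  rw [Finset.filter_erase, Finset.filter_erase,
    Finset.card_erase_of_mem (by simp [Finset.mem_erase, hij, hij.ne']),
    Finset.erase_eq_of_notMem (by simp), card_filter_gt]
  omega

lemma card_R_gt_j {i j : Fin n} (hij : i < j) :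
    (((univ.erase i).erase j).filter fun b => j < b).card = n - 1 - j.val := by
  rw [Finset.filter_erase, Finset.filter_erase,
    Finset.erase_eq_of_notMem (by simp),
    Finset.erase_eq_of_notMem (by simp [not_lt.2 hij.le]), card_filter_gt]


section Identities
variable {lam : n.Partition}


-- abbreviations in statements:
-- N1ii = Ncard lam i i i i ; N1ij = Ncard lam i i j j ; A = Ncard lam i j i j ;
-- B = Ncard lam i j j i ; C0 = Ncard lam i j i b0 ; E = Ncard lam i j j b0 ;
-- F = Ncard lam i j b0 i ; D = Ncard lam i j b0 j


variable {i j b0 : Fin n}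

lemma ident5 (hij : i ≠ j) (hb0i : b0 ≠ i) (hb0j : b0 ≠ j) :
    Ncard lam i j i j + (n-2) * Ncard lam i j i b0 = Ncard lam i i i i := by
  rw [← fiber_sum i j i, sum_split hij (fun b => Ncard lam i j i b),
    Ncard_diag_zero hij]
  have hc : ∀ b ∈ (univ.erase i).erase j, Ncard lam i j i b = Ncard lam i j i b0 := by
    intro b hb
    obtain ⟨hbj, hbi⟩ := mem_R.1 hb
    exact Ncard_congr (σ := Equiv.swap b b0)
      (Equiv.swap_apply_of_ne_of_ne (Ne.symm hbi) (Ne.symm hb0i))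
      (Equiv.swap_apply_of_ne_of_ne (Ne.symm hbj) (Ne.symm hb0j))
      (Equiv.swap_apply_of_ne_of_ne (Ne.symm hbi) (Ne.symm hb0i))
      (Equiv.swap_apply_left b b0)
  rw [Finset.sum_congr rfl hc, Finset.sum_const, card_R hij, smul_eq_mul]
  omega

lemma ident6 (hij : i ≠ j) (hb0i : b0 ≠ i) (hb0j : b0 ≠ j) :
    Ncard lam i j j i + (n-2) * Ncard lam i j j b0 = Ncard lam i i j j := by
  have h := fiber_sum (lam := lam) i j j
  rw [sum_split hij (fun b => Ncard lam i j j b), Ncard_diag_zero hij] at h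
  have hc : ∀ b ∈ (univ.erase i).erase j, Ncard lam i j j b = Ncard lam i j j b0 := by
    intro b hb
    obtain ⟨hbj, hbi⟩ := mem_R.1 hb
    exact Ncard_congr (σ := Equiv.swap b b0)
      (Equiv.swap_apply_of_ne_of_ne (Ne.symm hbi) (Ne.symm hb0i))
      (Equiv.swap_apply_of_ne_of_ne (Ne.symm hbj) (Ne.symm hb0j))
      (Equiv.swap_apply_of_ne_of_ne (Ne.symm hbj) (Ne.symm hb0j))
      (Equiv.swap_apply_left b b0)
  rw [Finset.sum_congr rfl hc, Finset.sum_const, card_R hij, smul_eq_mul] at h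
  omega

lemma ident7 (hij : i ≠ j) (hb0i : b0 ≠ i) (hb0j : b0 ≠ j) :
    Ncard lam i j i j + (n-2) * Ncard lam i j b0 j = Ncard lam i i i i := by
  have h := fiber_sum' (lam := lam) i j j
  rw [sum_split hij (fun a => Ncard lam i j a j), Ncard_diag_zero hij] at h
  have hc : ∀ a ∈ (univ.erase i).erase j, Ncard lam i j a j = Ncard lam i j b0 j := by
    intro a ha
    obtain ⟨haj, hai⟩ := mem_R.1 ha
    exact Ncard_congr (σ := Equiv.swap a b0)
      (Equiv.swap_apply_of_ne_of_ne (Ne.symm hai) (Ne.symm hb0i))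
      (Equiv.swap_apply_of_ne_of_ne (Ne.symm haj) (Ne.symm hb0j))
      (Equiv.swap_apply_left a b0)
      (Equiv.swap_apply_of_ne_of_ne (Ne.symm haj) (Ne.symm hb0j))
  rw [Finset.sum_congr rfl hc, Finset.sum_const, card_R hij, smul_eq_mul] at h
  have h2 : Ncard lam j j j j = Ncard lam i i i i :=
    Ncard_congr (σ := Equiv.swap j i) (Equiv.swap_apply_left j i) (Equiv.swap_apply_left j i)
      (Equiv.swap_apply_left j i) (Equiv.swap_apply_left j i)
  omega

lemma ident8 (hij : i ≠ j) (hb0i : b0 ≠ i) (hb0j : b0 ≠ j) :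
    Ncard lam i j j i + (n-2) * Ncard lam i j b0 i = Ncard lam i i j j := by
  have h := fiber_sum' (lam := lam) i j i
  rw [sum_split hij (fun a => Ncard lam i j a i), Ncard_diag_zero hij] at h
  have hc : ∀ a ∈ (univ.erase i).erase j, Ncard lam i j a i = Ncard lam i j b0 i := by
    intro a ha
    obtain ⟨haj, hai⟩ := mem_R.1 ha
    exact Ncard_congr (σ := Equiv.swap a b0)
      (Equiv.swap_apply_of_ne_of_ne (Ne.symm hai) (Ne.symm hb0i))
      (Equiv.swap_apply_of_ne_of_ne (Ne.symm haj) (Ne.symm hb0j))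
      (Equiv.swap_apply_left a b0)
      (Equiv.swap_apply_of_ne_of_ne (Ne.symm hai) (Ne.symm hb0i))
  rw [Finset.sum_congr rfl hc, Finset.sum_const, card_R hij, smul_eq_mul] at h
  have h2 : Ncard lam j j i i = Ncard lam i i j j :=
    Ncard_congr (σ := Equiv.swap i j) (Equiv.swap_apply_right i j) (Equiv.swap_apply_right i j)
      (Equiv.swap_apply_left i j) (Equiv.swap_apply_left i j)
  omega

lemma ident4 (hij : i ≠ j) : Ncard lam i i i i + (n-1) * Ncard lam i i j j = (conjClass n lam).card := by
  have h := sum_N1 (lam := lam) i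
  rw [← Finset.add_sum_erase _ _ (mem_univ i)] at h
  have hc : ∀ a ∈ univ.erase i, Ncard lam i i a a = Ncard lam i i j j := by
    intro a ha
    have hai : a ≠ i := (Finset.mem_erase.1 ha).1
    exact Ncard_congr (σ := Equiv.swap a j)
      (Equiv.swap_apply_of_ne_of_ne (Ne.symm hai) hij)
      (Equiv.swap_apply_of_ne_of_ne (Ne.symm hai) hij)
      (Equiv.swap_apply_left a j) (Equiv.swap_apply_left a j)
  rw [Finset.sum_congr rfl hc, Finset.sum_const, smul_eq_mul,
    Finset.card_erase_of_mem (mem_univ i), Finset.card_univ, Fintype.card_fin] at h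
  omega

lemma ident2 (i : Fin n) : n * Ncard lam i i i i = (conjClass n lam).card * Multiset.count 1 lam.parts := by
  have h1 : ∑ k, Ncard lam k k k k = n * Ncard lam i i i i := by
    have hc : ∀ k ∈ univ, Ncard lam k k k k = Ncard lam i i i i := by
      intro k _
      exact Ncard_congr (σ := Equiv.swap k i) (Equiv.swap_apply_left k i)
        (Equiv.swap_apply_left k i) (Equiv.swap_apply_left k i) (Equiv.swap_apply_left k i)
    rw [Finset.sum_congr rfl hc, Finset.sum_const, smul_eq_mul, Finset.card_univ,
      Fintype.card_fin]
  have h2 : ∑ k, Ncard lam k k k k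
      = (conjClass n lam).card * Multiset.count 1 lam.parts := by
    have e1 : ∀ k : Fin n, Ncard lam k k k k
        = ∑ ω ∈ conjClass n lam, if ω k = k then 1 else 0 := by
      intro k
      rw [N1_eq, Finset.card_filter]
    rw [Finset.sum_congr rfl (fun k _ => e1 k), Finset.sum_comm]
    have e2 : ∀ ω ∈ conjClass n lam,
        (∑ k, if ω k = k then (1:ℕ) else 0) = Multiset.count 1 lam.parts := by
      intro ω hω
      rw [← Finset.card_filter]
      exact fix_card hω
    rw [Finset.sum_congr rfl e2, Finset.sum_const, smul_eq_mul]
  omega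

lemma ident1 (hij : i ≠ j) : Ncard lam i i i i + (n-1) * Ncard lam i j i j
    = Ncard lam i i i i * Multiset.count 1 lam.parts := by
  have h1 : ∑ k, Ncard lam i k i k = Ncard lam i i i i + (n-1) * Ncard lam i j i j := by
    rw [← Finset.add_sum_erase _ _ (mem_univ i)]
    have hc : ∀ k ∈ univ.erase i, Ncard lam i k i k = Ncard lam i j i j := by
      intro k hk
      have hki : k ≠ i := (Finset.mem_erase.1 hk).1
      exact Ncard_congr (σ := Equiv.swap k j)
        (Equiv.swap_apply_of_ne_of_ne (Ne.symm hki) hij)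
        (Equiv.swap_apply_left k j)
        (Equiv.swap_apply_of_ne_of_ne (Ne.symm hki) hij)
        (Equiv.swap_apply_left k j)
    rw [Finset.sum_congr rfl hc, Finset.sum_const, smul_eq_mul,
      Finset.card_erase_of_mem (mem_univ i), Finset.card_univ, Fintype.card_fin]
  have h2 : ∑ k, Ncard lam i k i k = Ncard lam i i i i * Multiset.count 1 lam.parts := by
    have e1 : ∀ k : Fin n, Ncard lam i k i k
        = ∑ ω ∈ (conjClass n lam).filter (fun ω => ω i = i), if ω k = k then 1 else 0 := by
      intro k
      rw [Ncard, ← Finset.filter_filter, Finset.card_filter]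
    rw [Finset.sum_congr rfl (fun k _ => e1 k), Finset.sum_comm]
    have e2 : ∀ ω ∈ (conjClass n lam).filter (fun ω => ω i = i),
        (∑ k, if ω k = k then (1:ℕ) else 0) = Multiset.count 1 lam.parts := by
      intro ω hω
      rw [← Finset.card_filter]
      exact fix_card (Finset.mem_of_mem_filter ω hω)
    rw [Finset.sum_congr rfl e2, Finset.sum_const, smul_eq_mul, ← N1_eq]
  omega

lemma ident3 (hij : i ≠ j) : n * Ncard lam i i i i + n * (n-1) * Ncard lam i j j i
    = (conjClass n lam).card * (Multiset.count 1 lam.parts + 2 * Multiset.count 2 lam.parts) := by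
  have h1 : ∑ k, ∑ l, Ncard lam k l l k
      = n * Ncard lam i i i i + n * (n-1) * Ncard lam i j j i := by
    have inner : ∀ k : Fin n, ∑ l, Ncard lam k l l k
        = Ncard lam i i i i + (n-1) * Ncard lam i j j i := by
      intro k
      rw [← Finset.add_sum_erase _ _ (mem_univ k)]
      have hdiag : Ncard lam k k k k = Ncard lam i i i i :=
        Ncard_congr (σ := Equiv.swap k i) (Equiv.swap_apply_left k i) (Equiv.swap_apply_left k i)
          (Equiv.swap_apply_left k i) (Equiv.swap_apply_left k i)
      have hc : ∀ l ∈ univ.erase k, Ncard lam k l l k = Ncard lam i j j i := by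
        intro l hl
        have hlk : l ≠ k := (Finset.mem_erase.1 hl).1
        obtain ⟨σ, hσk, hσl⟩ := exists_perm_pair (Ne.symm hlk) hij
        exact Ncard_congr hσk hσl hσl hσk
      rw [hdiag, Finset.sum_congr rfl hc, Finset.sum_const, smul_eq_mul,
        Finset.card_erase_of_mem (mem_univ k), Finset.card_univ, Fintype.card_fin]
    rw [Finset.sum_congr rfl (fun k _ => inner k), Finset.sum_const, smul_eq_mul,
      Finset.card_univ, Fintype.card_fin]
    ring
  have h2 : ∑ k, ∑ l, Ncard lam k l l k
      = (conjClass n lam).card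
        * (Multiset.count 1 lam.parts + 2 * Multiset.count 2 lam.parts) := by
    have e1 : ∀ k l : Fin n, Ncard lam k l l k
        = ∑ ω ∈ conjClass n lam, if ω k = l ∧ ω l = k then 1 else 0 := by
      intro k l
      rw [Ncard, Finset.card_filter]
    have step1 : ∑ k, ∑ l, Ncard lam k l l k
        = ∑ ω ∈ conjClass n lam, ∑ k : Fin n, ∑ l : Fin n,
            (if ω k = l ∧ ω l = k then 1 else 0) := by
      rw [Finset.sum_congr rfl (fun k _ => Finset.sum_congr rfl (fun l _ => e1 k l))]
      have swap1 : ∀ k : Fin n, (∑ l : Fin n, ∑ ω ∈ conjClass n lam,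
          if ω k = l ∧ ω l = k then (1:ℕ) else 0)
          = ∑ ω ∈ conjClass n lam, ∑ l : Fin n, (if ω k = l ∧ ω l = k then (1:ℕ) else 0) :=
        fun k => Finset.sum_comm
      rw [Finset.sum_congr rfl (fun k _ => swap1 k)]
      exact Finset.sum_comm
    rw [step1]
    have e2 : ∀ ω ∈ conjClass n lam,
        (∑ k : Fin n, ∑ l : Fin n, (if ω k = l ∧ ω l = k then (1:ℕ) else 0))
          = Multiset.count 1 lam.parts + 2 * Multiset.count 2 lam.parts := by
      intro ω hω
      have inner2 : ∀ k : Fin n, (∑ l : Fin n, if ω k = l ∧ ω l = k then (1:ℕ) else 0)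
          = if ω (ω k) = k then 1 else 0 := by
        intro k
        rw [Finset.sum_eq_single (ω k)]
        · simp
        · intro l _ hl
          simp [Ne.symm hl]
        · simp
      rw [Finset.sum_congr rfl (fun k _ => inner2 k), ← Finset.card_filter]
      exact sqfix_card hω
    rw [Finset.sum_congr rfl e2, Finset.sum_const, smul_eq_mul]
  omega






lemma ident9 (hij : i ≠ j) (hb0i : b0 ≠ i) (hb0j : b0 ≠ j) :
    Ncard lam i j i j + Ncard lam i j j i
      + (n-2) * (Ncard lam i j i b0 + Ncard lam i j b0 j
          + Ncard lam i j j b0 + Ncard lam i j b0 i)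
      + 2 * (∑ a ∈ (univ.erase i).erase j, ∑ b ∈ (univ.erase i).erase j,
          if b < a then Ncard lam i j a b else 0)
      = (conjClass n lam).card := by
  have hc : (conjClass n lam).card = ∑ a, ∑ b, Ncard lam i j a b := by
    rw [← sum_N1 (lam := lam) i]
    exact Finset.sum_congr rfl (fun a _ => (fiber_sum i j a).symm)
  rw [sum_split hij (fun a => ∑ b, Ncard lam i j a b)] at hc
  have p1 : ∑ b, Ncard lam i j i b = Ncard lam i j i j + (n-2) * Ncard lam i j i b0 := by
    rw [fiber_sum]; exact (ident5 hij hb0i hb0j).symm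
  have p2 : ∑ b, Ncard lam i j j b = Ncard lam i j j i + (n-2) * Ncard lam i j j b0 := by
    rw [fiber_sum]; exact (ident6 hij hb0i hb0j).symm
  have p3 : ∑ a ∈ (univ.erase i).erase j, ∑ b, Ncard lam i j a b
      = (n-2) * Ncard lam i j b0 i + (n-2) * Ncard lam i j b0 j
        + 2 * (∑ a ∈ (univ.erase i).erase j, ∑ b ∈ (univ.erase i).erase j,
            if b < a then Ncard lam i j a b else 0) := by
    have inner : ∀ a ∈ (univ.erase i).erase j, ∑ b, Ncard lam i j a b
        = Ncard lam i j a i + Ncard lam i j a j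
          + ∑ b ∈ (univ.erase i).erase j, Ncard lam i j a b :=
      fun a _ => sum_split hij (fun b => Ncard lam i j a b)
    rw [Finset.sum_congr rfl inner, Finset.sum_add_distrib, Finset.sum_add_distrib]
    have hFc : ∀ a ∈ (univ.erase i).erase j, Ncard lam i j a i = Ncard lam i j b0 i := by
      intro a ha
      obtain ⟨haj, hai⟩ := mem_R.1 ha
      exact Ncard_congr (σ := Equiv.swap a b0)
        (Equiv.swap_apply_of_ne_of_ne (Ne.symm hai) (Ne.symm hb0i))
        (Equiv.swap_apply_of_ne_of_ne (Ne.symm haj) (Ne.symm hb0j))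
        (Equiv.swap_apply_left a b0)
        (Equiv.swap_apply_of_ne_of_ne (Ne.symm hai) (Ne.symm hb0i))
    have hDc : ∀ a ∈ (univ.erase i).erase j, Ncard lam i j a j = Ncard lam i j b0 j := by
      intro a ha
      obtain ⟨haj, hai⟩ := mem_R.1 ha
      exact Ncard_congr (σ := Equiv.swap a b0)
        (Equiv.swap_apply_of_ne_of_ne (Ne.symm hai) (Ne.symm hb0i))
        (Equiv.swap_apply_of_ne_of_ne (Ne.symm haj) (Ne.symm hb0j))
        (Equiv.swap_apply_left a b0)
        (Equiv.swap_apply_of_ne_of_ne (Ne.symm haj) (Ne.symm hb0j))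
    rw [Finset.sum_congr rfl hFc, Finset.sum_congr rfl hDc, Finset.sum_const, Finset.sum_const,
      card_R hij, smul_eq_mul, smul_eq_mul]
    have hFT : ∑ a ∈ (univ.erase i).erase j, ∑ b ∈ (univ.erase i).erase j, Ncard lam i j a b
        = 2 * (∑ a ∈ (univ.erase i).erase j, ∑ b ∈ (univ.erase i).erase j,
            if b < a then Ncard lam i j a b else 0) := by
      have point : ∀ a ∈ (univ.erase i).erase j, ∀ b ∈ (univ.erase i).erase j,
          Ncard lam i j a b = (if b < a then Ncard lam i j a b else 0)
            + (if a < b then Ncard lam i j a b else 0) := by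
        intro a _ b _
        rcases lt_trichotomy a b with h | h | h
        · simp [h, not_lt.2 h.le]
        · subst h
          simp [lt_irrefl, Ncard_diag_zero hij]
        · simp [h, not_lt.2 h.le]
      calc ∑ a ∈ (univ.erase i).erase j, ∑ b ∈ (univ.erase i).erase j, Ncard lam i j a b
          = ∑ a ∈ (univ.erase i).erase j, ∑ b ∈ (univ.erase i).erase j,
              ((if b < a then Ncard lam i j a b else 0)
                + (if a < b then Ncard lam i j a b else 0)) := by
            exact Finset.sum_congr rfl (fun a ha =>
              Finset.sum_congr rfl (fun b hb => point a ha b hb))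
        _ = (∑ a ∈ (univ.erase i).erase j, ∑ b ∈ (univ.erase i).erase j,
              if b < a then Ncard lam i j a b else 0)
            + ∑ a ∈ (univ.erase i).erase j, ∑ b ∈ (univ.erase i).erase j,
              (if a < b then Ncard lam i j a b else 0) := by
            rw [← Finset.sum_add_distrib]
            exact Finset.sum_congr rfl (fun a _ => Finset.sum_add_distrib)
        _ = 2 * (∑ a ∈ (univ.erase i).erase j, ∑ b ∈ (univ.erase i).erase j,
              if b < a then Ncard lam i j a b else 0) := by
            have hswap : ∑ a ∈ (univ.erase i).erase j, ∑ b ∈ (univ.erase i).erase j,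
                (if a < b then Ncard lam i j a b else 0)
                = ∑ a ∈ (univ.erase i).erase j, ∑ b ∈ (univ.erase i).erase j,
                  (if b < a then Ncard lam i j a b else 0) := by
              rw [Finset.sum_comm]
              apply Finset.sum_congr rfl
              intro x hx
              apply Finset.sum_congr rfl
              intro y hy
              by_cases h : y < x
              · obtain ⟨hxj, hxi⟩ := mem_R.1 hx
                obtain ⟨hyj, hyi⟩ := mem_R.1 hy
                simp only [if_pos h]
                exact Ncard_congr (σ := Equiv.swap y x)
                  (Equiv.swap_apply_of_ne_of_ne (Ne.symm hyi) (Ne.symm hxi))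
                  (Equiv.swap_apply_of_ne_of_ne (Ne.symm hyj) (Ne.symm hxj))
                  (Equiv.swap_apply_left y x) (Equiv.swap_apply_right y x)
              · simp [h]
            rw [hswap]; ring
    rw [hFT]
  rw [p1, p2, p3] at hc
  rw [hc]
  ring



lemma ident10 {i j b0 : Fin n} (hij : i < j) (hb0i : b0 ≠ i) (hb0j : b0 ≠ j) :
    ((conjClass n lam).filter fun ω => ω j < ω i).card
      = i.val * Ncard lam i j i b0
        + (Ncard lam i j j i + (j.val - 1) * Ncard lam i j j b0)
        + ((n - 2 - i.val) * Ncard lam i j b0 i + (n - 1 - j.val) * Ncard lam i j b0 j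
          + ∑ a ∈ (univ.erase i).erase j, ∑ b ∈ (univ.erase i).erase j,
              if b < a then Ncard lam i j a b else 0) := by
  have hijne : i ≠ j := Fin.ne_of_lt hij
  -- Step 0 : fiberwise decomposition
  have step0 : ((conjClass n lam).filter fun ω => ω j < ω i).card
      = ∑ a, ∑ b, if b < a then Ncard lam i j a b else 0 := by
    rw [Finset.card_eq_sum_card_fiberwise
      (f := fun ω : Perm (Fin n) => ω i) (t := univ) (fun x _ => mem_univ _)]
    apply Finset.sum_congr rfl
    intro a _
    rw [Finset.card_eq_sum_card_fiberwise
      (f := fun ω : Perm (Fin n) => ω j) (t := univ) (fun x _ => mem_univ _)]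
    apply Finset.sum_congr rfl
    intro b _
    rw [Finset.filter_filter, Finset.filter_filter]
    by_cases hba : b < a
    · rw [if_pos hba, Ncard]
      congr 1
      apply Finset.filter_congr
      intro ω _
      constructor
      · rintro ⟨-, h1, h2⟩; exact ⟨h1, h2⟩
      · rintro ⟨h1, h2⟩
        exact ⟨by rw [h1, h2]; exact hba, h1, h2⟩
    · rw [if_neg hba, Finset.card_eq_zero]
      apply Finset.filter_false_of_mem
      rintro ω - ⟨hlt, h1, h2⟩
      exact hba (by rw [← h1, ← h2]; exact hlt)
  rw [step0, sum_split hijne (fun a => ∑ b, if b < a then Ncard lam i j a b else 0)]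
  -- piece a = i
  have pi : (∑ b, if b < i then Ncard lam i j i b else 0) = i.val * Ncard lam i j i b0 := by
    rw [← Finset.sum_filter]
    have hc : ∀ b ∈ univ.filter (fun b : Fin n => b < i),
        Ncard lam i j i b = Ncard lam i j i b0 := by
      intro b hb
      have hbi : b < i := (Finset.mem_filter.1 hb).2
      have hbne_i : b ≠ i := Fin.ne_of_lt hbi
      have hbne_j : b ≠ j := Fin.ne_of_lt (lt_trans hbi hij)
      exact Ncard_congr (σ := Equiv.swap b b0)
        (Equiv.swap_apply_of_ne_of_ne (Ne.symm hbne_i) (Ne.symm hb0i))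
        (Equiv.swap_apply_of_ne_of_ne (Ne.symm hbne_j) (Ne.symm hb0j))
        (Equiv.swap_apply_of_ne_of_ne (Ne.symm hbne_i) (Ne.symm hb0i))
        (Equiv.swap_apply_left b b0)
    rw [Finset.sum_congr rfl hc, Finset.sum_const, smul_eq_mul, card_filter_lt]
  -- piece a = j
  have pj : (∑ b, if b < j then Ncard lam i j j b else 0)
      = Ncard lam i j j i + (j.val - 1) * Ncard lam i j j b0 := by
    rw [← Finset.sum_filter]
    have hi_mem : i ∈ univ.filter (fun b : Fin n => b < j) := Finset.mem_filter.2 ⟨mem_univ i, hij⟩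
    rw [← Finset.add_sum_erase _ _ hi_mem]
    congr 1
    have hc : ∀ b ∈ (univ.filter (fun b : Fin n => b < j)).erase i,
        Ncard lam i j j b = Ncard lam i j j b0 := by
      intro b hb
      have hbne_i : b ≠ i := (Finset.mem_erase.1 hb).1
      have hbj : b < j := (Finset.mem_filter.1 (Finset.mem_erase.1 hb).2).2
      have hbne_j : b ≠ j := Fin.ne_of_lt hbj
      exact Ncard_congr (σ := Equiv.swap b b0)
        (Equiv.swap_apply_of_ne_of_ne (Ne.symm hbne_i) (Ne.symm hb0i))
        (Equiv.swap_apply_of_ne_of_ne (Ne.symm hbne_j) (Ne.symm hb0j))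
        (Equiv.swap_apply_of_ne_of_ne (Ne.symm hbne_j) (Ne.symm hb0j))
        (Equiv.swap_apply_left b b0)
    rw [Finset.sum_congr rfl hc, Finset.sum_const, smul_eq_mul,
      Finset.card_erase_of_mem hi_mem, card_filter_lt]
  -- piece a ∈ R
  have pR : (∑ a ∈ (univ.erase i).erase j, ∑ b, if b < a then Ncard lam i j a b else 0)
      = (n - 2 - i.val) * Ncard lam i j b0 i + (n - 1 - j.val) * Ncard lam i j b0 j
        + ∑ a ∈ (univ.erase i).erase j, ∑ b ∈ (univ.erase i).erase j,
            if b < a then Ncard lam i j a b else 0 := by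
    have inner : ∀ a ∈ (univ.erase i).erase j,
        (∑ b, if b < a then Ncard lam i j a b else 0)
          = (if i < a then Ncard lam i j a i else 0) + (if j < a then Ncard lam i j a j else 0)
            + ∑ b ∈ (univ.erase i).erase j, if b < a then Ncard lam i j a b else 0 :=
      fun a _ => sum_split hijne (fun b => if b < a then Ncard lam i j a b else 0)
    rw [Finset.sum_congr rfl inner, Finset.sum_add_distrib, Finset.sum_add_distrib]
    have t1 : (∑ a ∈ (univ.erase i).erase j, if i < a then Ncard lam i j a i else 0)
        = (n - 2 - i.val) * Ncard lam i j b0 i := by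
      rw [← Finset.sum_filter]
      have hc : ∀ a ∈ ((univ.erase i).erase j).filter (fun a => i < a),
          Ncard lam i j a i = Ncard lam i j b0 i := by
        intro a ha
        obtain ⟨haj, hai⟩ := mem_R.1 (Finset.mem_of_mem_filter a ha)
        exact Ncard_congr (σ := Equiv.swap a b0)
          (Equiv.swap_apply_of_ne_of_ne (Ne.symm hai) (Ne.symm hb0i))
          (Equiv.swap_apply_of_ne_of_ne (Ne.symm haj) (Ne.symm hb0j))
          (Equiv.swap_apply_left a b0)
          (Equiv.swap_apply_of_ne_of_ne (Ne.symm hai) (Ne.symm hb0i))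
      rw [Finset.sum_congr rfl hc, Finset.sum_const, smul_eq_mul, card_R_gt_i hij]
    have t2 : (∑ a ∈ (univ.erase i).erase j, if j < a then Ncard lam i j a j else 0)
        = (n - 1 - j.val) * Ncard lam i j b0 j := by
      rw [← Finset.sum_filter]
      have hc : ∀ a ∈ ((univ.erase i).erase j).filter (fun a => j < a),
          Ncard lam i j a j = Ncard lam i j b0 j := by
        intro a ha
        obtain ⟨haj, hai⟩ := mem_R.1 (Finset.mem_of_mem_filter a ha)
        exact Ncard_congr (σ := Equiv.swap a b0)
          (Equiv.swap_apply_of_ne_of_ne (Ne.symm hai) (Ne.symm hb0i))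
          (Equiv.swap_apply_of_ne_of_ne (Ne.symm haj) (Ne.symm hb0j))
          (Equiv.swap_apply_left a b0)
          (Equiv.swap_apply_of_ne_of_ne (Ne.symm haj) (Ne.symm hb0j))
      rw [Finset.sum_congr rfl hc, Finset.sum_const, smul_eq_mul, card_R_gt_j hij]
    rw [t1, t2]
  rw [pi, pj, pR]

end Identities

noncomputable def Phi (nn u v iv jv : ℕ) : ℝ :=
  (4*(v:ℝ)*((nn:ℝ)-2) + 2*(u:ℝ)*((nn:ℝ)-(u:ℝ))*(iv:ℝ)
    + 2*((nn:ℝ)-(u:ℝ)-2*(v:ℝ))*((jv:ℝ)-1)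
    + 2*((nn:ℝ)-(u:ℝ)-2*(v:ℝ))*((nn:ℝ)-2-(iv:ℝ))
    + 2*(u:ℝ)*((nn:ℝ)-(u:ℝ))*((nn:ℝ)-1-(jv:ℝ))
    + ((nn:ℝ)-2)*((nn:ℝ)*((nn:ℝ)-1) - (u:ℝ)*((u:ℝ)-1) - 2*(v:ℝ)
        - 2*(u:ℝ)*((nn:ℝ)-(u:ℝ)) - 2*((nn:ℝ)-(u:ℝ)) + 4*(v:ℝ)))
  / (2*(nn:ℝ)*((nn:ℝ)-1)*((nn:ℝ)-2))

lemma master (hn : 3 ≤ n) (lam : n.Partition) (i j : Fin n) (hij : i < j) :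
    ((((conjClass n lam).filter fun ω => ω j < ω i).card : ℝ)) / ((conjClass n lam).card : ℝ)
      = Phi n (Multiset.count 1 lam.parts) (Multiset.count 2 lam.parts) i.val j.val := by
  have hijne : i ≠ j := Fin.ne_of_lt hij
  have hivjv : i.val < j.val := hij
  have hjn : j.val < n := j.isLt
  -- choose a fresh element b0
  obtain ⟨b0, hb0⟩ : ((univ.erase i).erase j).Nonempty := by
    rw [← Finset.card_pos, card_R hijne]; omega
  obtain ⟨hb0j, hb0i⟩ := mem_R.1 hb0
  -- cast lemmas
  have cn1 : ((n-1:ℕ):ℝ) = (n:ℝ)-1 := by rw [Nat.cast_sub (by omega)]; norm_num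
  have cn2 : ((n-2:ℕ):ℝ) = (n:ℝ)-2 := by rw [Nat.cast_sub (by omega)]; norm_num
  have cj1 : ((j.val-1:ℕ):ℝ) = (j.val:ℝ)-1 := by rw [Nat.cast_sub (by omega)]; norm_num
  have cn2i : ((n-2-i.val:ℕ):ℝ) = (n:ℝ)-2-(i.val:ℝ) := by
    rw [Nat.cast_sub (by omega), cn2]
  have cn1j : ((n-1-j.val:ℕ):ℝ) = (n:ℝ)-1-(j.val:ℝ) := by
    rw [Nat.cast_sub (by omega), cn1]
  have hcpos : 0 < (conjClass n lam).card := (conjClass_nonempty (by omega)).card_pos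
  have hc0 : ((conjClass n lam).card : ℝ) ≠ 0 := by positivity
  have hn0 : (n:ℝ) ≠ 0 := by
    have : (3:ℝ) ≤ (n:ℝ) := by exact_mod_cast hn
    linarith
  have hn1 : (n:ℝ)-1 ≠ 0 := by
    have : (3:ℝ) ≤ (n:ℝ) := by exact_mod_cast hn
    intro h; linarith
  have hn2 : (n:ℝ)-2 ≠ 0 := by
    have : (3:ℝ) ≤ (n:ℝ) := by exact_mod_cast hn
    intro h; linarith
  -- real versions of the identities
  have r1 : (Ncard lam i i i i : ℝ) + ((n:ℝ)-1) * (Ncard lam i j i j : ℝ)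
      = (Ncard lam i i i i : ℝ) * (Multiset.count 1 lam.parts : ℝ) := by
    have h := congrArg (fun t : ℕ => (t:ℝ)) (ident1 (lam := lam) (j := j) hijne)
    push_cast at h
    rw [cn1] at h
    exact h
  have r2 : (n:ℝ) * (Ncard lam i i i i : ℝ)
      = ((conjClass n lam).card : ℝ) * (Multiset.count 1 lam.parts : ℝ) := by
    have h := congrArg (fun t : ℕ => (t:ℝ)) (ident2 (lam := lam) i)
    push_cast at h
    exact h
  have r3 : (n:ℝ) * (Ncard lam i i i i : ℝ) + (n:ℝ) * ((n:ℝ)-1) * (Ncard lam i j j i : ℝ)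
      = ((conjClass n lam).card : ℝ)
        * ((Multiset.count 1 lam.parts : ℝ) + 2 * (Multiset.count 2 lam.parts : ℝ)) := by
    have h := congrArg (fun t : ℕ => (t:ℝ)) (ident3 (lam := lam) hijne)
    push_cast at h
    rw [cn1] at h
    exact h
  have r4 : (Ncard lam i i i i : ℝ) + ((n:ℝ)-1) * (Ncard lam i i j j : ℝ)
      = ((conjClass n lam).card : ℝ) := by
    have h := congrArg (fun t : ℕ => (t:ℝ)) (ident4 (lam := lam) hijne)
    push_cast at h
    rw [cn1] at h
    exact h
  have r5 : (Ncard lam i j i j : ℝ) + ((n:ℝ)-2) * (Ncard lam i j i b0 : ℝ)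
      = (Ncard lam i i i i : ℝ) := by
    have h := congrArg (fun t : ℕ => (t:ℝ)) (ident5 (lam := lam) hijne hb0i hb0j)
    push_cast at h
    rw [cn2] at h
    exact h
  have r6 : (Ncard lam i j j i : ℝ) + ((n:ℝ)-2) * (Ncard lam i j j b0 : ℝ)
      = (Ncard lam i i j j : ℝ) := by
    have h := congrArg (fun t : ℕ => (t:ℝ)) (ident6 (lam := lam) hijne hb0i hb0j)
    push_cast at h
    rw [cn2] at h
    exact h
  have r7 : (Ncard lam i j i j : ℝ) + ((n:ℝ)-2) * (Ncard lam i j b0 j : ℝ)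
      = (Ncard lam i i i i : ℝ) := by
    have h := congrArg (fun t : ℕ => (t:ℝ)) (ident7 (lam := lam) hijne hb0i hb0j)
    push_cast at h
    rw [cn2] at h
    exact h
  have r8 : (Ncard lam i j j i : ℝ) + ((n:ℝ)-2) * (Ncard lam i j b0 i : ℝ)
      = (Ncard lam i i j j : ℝ) := by
    have h := congrArg (fun t : ℕ => (t:ℝ)) (ident8 (lam := lam) hijne hb0i hb0j)
    push_cast at h
    rw [cn2] at h
    exact h
  have r9 : (Ncard lam i j i j : ℝ) + (Ncard lam i j j i : ℝ)
      + ((n:ℝ)-2) * ((Ncard lam i j i b0 : ℝ) + (Ncard lam i j b0 j : ℝ)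
          + (Ncard lam i j j b0 : ℝ) + (Ncard lam i j b0 i : ℝ))
      + 2 * ((∑ a ∈ (univ.erase i).erase j, ∑ b ∈ (univ.erase i).erase j,
          if b < a then Ncard lam i j a b else 0 : ℕ) : ℝ)
      = ((conjClass n lam).card : ℝ) := by
    have h := congrArg (fun t : ℕ => (t:ℝ)) (ident9 (lam := lam) hijne hb0i hb0j)
    push_cast at h
    rw [cn2] at h
    push_cast at h ⊢
    exact h
  have r10 : ((((conjClass n lam).filter fun ω => ω j < ω i).card : ℕ) : ℝ)
      = (i.val : ℝ) * (Ncard lam i j i b0 : ℝ)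
        + ((Ncard lam i j j i : ℝ) + ((j.val:ℝ)-1) * (Ncard lam i j j b0 : ℝ))
        + (((n:ℝ)-2-(i.val:ℝ)) * (Ncard lam i j b0 i : ℝ)
          + ((n:ℝ)-1-(j.val:ℝ)) * (Ncard lam i j b0 j : ℝ)
          + ((∑ a ∈ (univ.erase i).erase j, ∑ b ∈ (univ.erase i).erase j,
              if b < a then Ncard lam i j a b else 0 : ℕ) : ℝ)) := by
    have h := congrArg (fun t : ℕ => (t:ℝ)) (ident10 (lam := lam) hij hb0i hb0j)
    push_cast at h
    rw [cj1, cn2i, cn1j] at h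
    push_cast at h ⊢
    exact h
  -- algebraic elimination
  have hA : (Ncard lam i j i j : ℝ) * ((n:ℝ)*((n:ℝ)-1))
      = ((conjClass n lam).card : ℝ) * (Multiset.count 1 lam.parts : ℝ)
        * ((Multiset.count 1 lam.parts : ℝ) - 1) := by
    linear_combination (n:ℝ) * r1 + ((Multiset.count 1 lam.parts : ℝ) - 1) * r2
  have hB : (Ncard lam i j j i : ℝ) * ((n:ℝ)*((n:ℝ)-1))
      = 2 * ((conjClass n lam).card : ℝ) * (Multiset.count 2 lam.parts : ℝ) := by
    linear_combination r3 - r2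
  have hN1ij : (Ncard lam i i j j : ℝ) * ((n:ℝ)*((n:ℝ)-1))
      = ((conjClass n lam).card : ℝ) * ((n:ℝ) - (Multiset.count 1 lam.parts : ℝ)) := by
    linear_combination (n:ℝ) * r4 - r2
  have hC : (Ncard lam i j i b0 : ℝ) * ((n:ℝ)*((n:ℝ)-1)*((n:ℝ)-2))
      = ((conjClass n lam).card : ℝ) * (Multiset.count 1 lam.parts : ℝ)
        * ((n:ℝ) - (Multiset.count 1 lam.parts : ℝ)) := by
    linear_combination (n:ℝ)*((n:ℝ)-1) * r5 - hA + ((n:ℝ)-1) * r2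
  have hD : (Ncard lam i j b0 j : ℝ) * ((n:ℝ)*((n:ℝ)-1)*((n:ℝ)-2))
      = ((conjClass n lam).card : ℝ) * (Multiset.count 1 lam.parts : ℝ)
        * ((n:ℝ) - (Multiset.count 1 lam.parts : ℝ)) := by
    linear_combination (n:ℝ)*((n:ℝ)-1) * r7 - hA + ((n:ℝ)-1) * r2
  have hE : (Ncard lam i j j b0 : ℝ) * ((n:ℝ)*((n:ℝ)-1)*((n:ℝ)-2))
      = ((conjClass n lam).card : ℝ)
        * ((n:ℝ) - (Multiset.count 1 lam.parts : ℝ) - 2*(Multiset.count 2 lam.parts : ℝ)) := by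
    linear_combination (n:ℝ)*((n:ℝ)-1) * r6 - hB + hN1ij
  have hF : (Ncard lam i j b0 i : ℝ) * ((n:ℝ)*((n:ℝ)-1)*((n:ℝ)-2))
      = ((conjClass n lam).card : ℝ)
        * ((n:ℝ) - (Multiset.count 1 lam.parts : ℝ) - 2*(Multiset.count 2 lam.parts : ℝ)) := by
    linear_combination (n:ℝ)*((n:ℝ)-1) * r8 - hB + hN1ij
  have hHf : 2 * ((∑ a ∈ (univ.erase i).erase j, ∑ b ∈ (univ.erase i).erase j,
          if b < a then Ncard lam i j a b else 0 : ℕ) : ℝ) * ((n:ℝ)*((n:ℝ)-1)*((n:ℝ)-2))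
      = ((conjClass n lam).card : ℝ)
        * ((n:ℝ)*((n:ℝ)-1)*((n:ℝ)-2)
          - ((n:ℝ)-2) * ((Multiset.count 1 lam.parts : ℝ)*((Multiset.count 1 lam.parts : ℝ)-1)
            + 2*(Multiset.count 2 lam.parts : ℝ)
            + 2*((Multiset.count 1 lam.parts : ℝ)*((n:ℝ)-(Multiset.count 1 lam.parts : ℝ))
              + ((n:ℝ)-(Multiset.count 1 lam.parts : ℝ)-2*(Multiset.count 2 lam.parts : ℝ))))) := by
    linear_combination ((n:ℝ)*((n:ℝ)-1)*((n:ℝ)-2)) * r9 - ((n:ℝ)-2) * hA - ((n:ℝ)-2) * hB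
      - ((n:ℝ)-2) * (hC + hD + hE + hF)
  -- final computation
  rw [Phi, div_eq_div_iff hc0 (by
    apply mul_ne_zero (mul_ne_zero (mul_ne_zero two_ne_zero hn0) hn1) hn2)]
  linear_combination (2*(n:ℝ)*((n:ℝ)-1)*((n:ℝ)-2)) * r10 + 2*(i.val:ℝ) * hC
    + 2*((n:ℝ)-2) * hB + 2*((j.val:ℝ)-1) * hE + 2*((n:ℝ)-2-(i.val:ℝ)) * hF
    + 2*((n:ℝ)-1-(j.val:ℝ)) * hD + hHf

theorem stmt4 (n : ℕ) (hn : 3 ≤ n) (lam mu : n.Partition)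
    (h1 : Multiset.count 1 lam.parts = Multiset.count 1 mu.parts)
    (h2 : Multiset.count 2 lam.parts = Multiset.count 2 mu.parts)
    (wt : Fin n → Fin n → ℝ) (X : Equiv.Perm (Fin n) → ℝ)
    (hX : ∀ ω, X ω = ∑ p ∈ Finset.univ.filter (fun p : Fin n × Fin n => p.1 < p.2),
      wt p.1 p.2 * (if ω p.2 < ω p.1 then 1 else 0)) :
    (∑ ω ∈ conjClass n lam, X ω) / ((conjClass n lam).card : ℝ)
      = (∑ ω ∈ conjClass n mu, X ω) / ((conjClass n mu).card : ℝ) := by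
  have key : ∀ nu : n.Partition, (∑ ω ∈ conjClass n nu, X ω) / ((conjClass n nu).card : ℝ)
      = ∑ p ∈ Finset.univ.filter (fun p : Fin n × Fin n => p.1 < p.2),
          wt p.1 p.2 * Phi n (Multiset.count 1 nu.parts) (Multiset.count 2 nu.parts)
            p.1.val p.2.val := by
    intro nu
    have hsum : ∑ ω ∈ conjClass n nu, X ω
        = ∑ p ∈ Finset.univ.filter (fun p : Fin n × Fin n => p.1 < p.2),
            wt p.1 p.2 * (((conjClass n nu).filter fun ω => ω p.2 < ω p.1).card : ℝ) := by
      rw [Finset.sum_congr rfl (fun ω _ => hX ω), Finset.sum_comm]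
      apply Finset.sum_congr rfl
      intro p _
      rw [← Finset.mul_sum, Finset.sum_boole]
    rw [hsum, Finset.sum_div]
    apply Finset.sum_congr rfl
    intro p hp
    rw [mul_div_assoc, master hn nu p.1 p.2 (Finset.mem_filter.1 hp).2]
  rw [key lam, key mu, h1, h2]
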